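/- (Tadmor's entropy conservation theorem, semi-discrete 1D periodic version.) Let n, N ≥ 1, Δx > 0, let η : ℝ^n → ℝ be differentiable with gradient V(u) = ∇η(u), let ψ : ℝ^n → ℝ, and let F̃ : ℝ^n × ℝ^n → ℝ^n satisfy the jump condition (V(b) − V(a)) · F̃(a,b) = ψ(b) − ψ(a) for all a, b ∈ ℝ^n. Let U : ℝ → (ℤ/Nℤ → ℝ^n) be differentiable in t and satisfy, for every cell i, d/dt U_i = −(F̃(U_i, U_{i+1}) − F̃(U_{i−1}, U_i))/Δx. Then for every i and t, d/dt η(U_i) + (q̃_{i+1/2} − q̃_{i−1/2})/Δx = 0, where q̃_{i+1/2} = (1/2)(V(U_i) + V(U_{i+1})) · F̃(U_i, U_{i+1}) − (1/2)(ψ(U_i) + ψ(U_{i+1})). -/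

import Mathlib

open Matrix

/-- Tadmor's entropy conservation theorem, semi-discrete 1-D periodic version: if the
two-point flux `F̃` satisfies the jump condition, then the semi-discrete scheme satisfies
a discrete entropy equality with numerical entropy flux
`q̃_{i+1/2} = ½(V_i + V_{i+1})·F̃(U_i,U_{i+1}) − ½(ψ_i + ψ_{i+1})`. -/
theorem tadmor_entropy_conservation
    (n N : ℕ) (hn : 1 ≤ n) (hN : 1 ≤ N) [NeZero N] (Δx : ℝ) (hΔx : 0 < Δx)
    (η ψ : (Fin n → ℝ) → ℝ) (V : (Fin n → ℝ) → (Fin n → ℝ))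
    (hV : ∀ u, HasFDerivAt η (∑ k, V u k • (ContinuousLinearMap.proj k : (Fin n → ℝ) →L[ℝ] ℝ)) u)
    (Ftil : (Fin n → ℝ) → (Fin n → ℝ) → (Fin n → ℝ))
    (hjump : ∀ a b, (V b - V a) ⬝ᵥ Ftil a b = ψ b - ψ a)
    (U : ℝ → ZMod N → (Fin n → ℝ))
    (hU : ∀ (t : ℝ) (i : ZMod N), HasDerivAt (fun τ => U τ i)
      (-(Δx)⁻¹ • (Ftil (U t i) (U t (i + 1)) - Ftil (U t (i - 1)) (U t i))) t)
    (qtil : ℝ → ZMod N → ℝ)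
    (hqtil : ∀ (t : ℝ) (i : ZMod N), qtil t i
      = 1 / 2 * ((V (U t i) + V (U t (i + 1))) ⬝ᵥ Ftil (U t i) (U t (i + 1)))
        - 1 / 2 * (ψ (U t i) + ψ (U t (i + 1)))) :
    ∀ (t : ℝ) (i : ZMod N),
      deriv (fun τ => η (U τ i)) t + (qtil t i - qtil t (i - 1)) / Δx = 0 := by

  intro t i
  have hd := (hV (U t i)).comp_hasDerivAt t (hU t i)
  set Fr := Ftil (U t i) (U t (i + 1)) with hFr
  set Fl := Ftil (U t (i - 1)) (U t i) with hFl
  have hd' : HasDerivAt (fun τ => η (U τ i))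
      ((∑ k, V (U t i) k • (ContinuousLinearMap.proj k : (Fin n → ℝ) →L[ℝ] ℝ))
        (-(Δx)⁻¹ • (Fr - Fl))) t := hd
  have hderiv : deriv (fun τ => η (U τ i)) t
      = -(Δx)⁻¹ * (V (U t i) ⬝ᵥ (Fr - Fl)) := by
    rw [hd'.deriv]
    simp only [ContinuousLinearMap.sum_apply, ContinuousLinearMap.smul_apply,
      ContinuousLinearMap.proj_apply, Pi.smul_apply, Pi.sub_apply, smul_eq_mul,
      dotProduct, Finset.mul_sum]
    exact Finset.sum_congr rfl fun k _ => by ring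
  have hq1 : qtil t i = V (U t i) ⬝ᵥ Fr - ψ (U t i) := by
    have hj := hjump (U t i) (U t (i + 1))
    rw [sub_dotProduct] at hj
    rw [hqtil t i, add_dotProduct]
    linarith
  have hq2 : qtil t (i - 1) = V (U t i) ⬝ᵥ Fl - ψ (U t i) := by
    have hi : i - 1 + 1 = i := by ring
    have hj := hjump (U t (i - 1)) (U t i)
    rw [sub_dotProduct] at hj
    rw [hqtil t (i - 1), hi, add_dotProduct]
    linarith
  rw [hderiv, hq1, hq2, dotProduct_sub]
  field_simp
  ring
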